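/- For every 3×3 complex matrix ρ, (1/2)(J₁ ρ J₁ + J₂ ρ J₂ + J₃ ρ J₃) = (1/2)(Tr(ρ)·I₃ − ρᵀ); that is, the spin-1 Landau–Streater channel coincides with the Werner–Holevo channel. -/
import Mathlib

open Matrix

/-- The spin-1 matrix `J₁ = -i[[0,0,0],[0,0,1],[0,-1,0]]`. -/
noncomputable def J1 : Matrix (Fin 3) (Fin 3) ℂ :=
  (-Complex.I) • !![0, 0, 0; 0, 0, 1; 0, -1, 0]

/-- The spin-1 matrix `J₂ = -i[[0,0,-1],[0,0,0],[1,0,0]]`. -/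
noncomputable def J2 : Matrix (Fin 3) (Fin 3) ℂ :=
  (-Complex.I) • !![0, 0, -1; 0, 0, 0; 1, 0, 0]

/-- The spin-1 matrix `J₃ = -i[[0,1,0],[-1,0,0],[0,0,0]]`. -/
noncomputable def J3 : Matrix (Fin 3) (Fin 3) ℂ :=
  (-Complex.I) • !![0, 1, 0; -1, 0, 0; 0, 0, 0]

/-- The spin-1 Landau–Streater channel coincides with the Werner–Holevo channel. -/
theorem landau_streater_eq_werner_holevo (ρ : Matrix (Fin 3) (Fin 3) ℂ) :
    (1 / 2 : ℂ) • (J1 * ρ * J1 + J2 * ρ * J2 + J3 * ρ * J3) =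
      (1 / 2 : ℂ) • (ρ.trace • (1 : Matrix (Fin 3) (Fin 3) ℂ) - ρᵀ) := by
  ext i j
  fin_cases i <;> fin_cases j <;>
    simp [J1, J2, J3, Matrix.mul_apply, Matrix.vecMul, dotProduct,
      Matrix.vecHead, Matrix.vecTail, Matrix.trace, Fin.sum_univ_three, Matrix.one_apply, Matrix.transpose_apply] <;>
    ring_nf <;> simp [Complex.I_sq] <;> ring
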